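/- The exponential generating function identity Σ_{n≥0} F_n(x,z) tⁿ/n! = (1-x)e^{zt}/(e^{xt} - x e^{t}) holds as an identity of formal power series in t over the field ℚ(x,z); equivalently, (e^{xt} - x e^{t})·Σ_{n≥0} F_n(x,z) tⁿ/n! = (1-x)e^{zt}, where F_n(x,z) = Σ_{σ ∈ S_n} x^{exc(σ)} z^{fix(σ)}. -/

import Mathlib

open Finset

/-- The value `σ(i)` of a permutation of `{1,…,n}` at a one-based position `i`,
with the convention `σ(0) = 0` (and value `0` outside `[1,n]`). -/
def pv {n : ℕ} (σ : Equiv.Perm (Fin n)) (i : ℕ) : ℕ :=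
  if h : 1 ≤ i ∧ i ≤ n then ((σ ⟨i - 1, by omega⟩ : Fin n) : ℕ) + 1 else 0

/-- Number of excedances: indices `i` with `σ(i) > i`. -/
def exc {n : ℕ} (σ : Equiv.Perm (Fin n)) : ℕ :=
  ((Finset.Icc 1 n).filter (fun i => i < pv σ i)).card

/-- Number of fixed points: indices `i` with `σ(i) = i`. -/
def fixpt {n : ℕ} (σ : Equiv.Perm (Fin n)) : ℕ :=
  ((Finset.Icc 1 n).filter (fun i => pv σ i = i)).card

/-- Number of left successions: indices `1 ≤ i ≤ n` with `σ(i-1) + 1 = σ(i)`. -/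
def lsuc {n : ℕ} (σ : Equiv.Perm (Fin n)) : ℕ :=
  ((Finset.Icc 1 n).filter (fun i => pv σ (i - 1) + 1 = pv σ i)).card

def excF {n : ℕ} (σ : Equiv.Perm (Fin n)) : ℕ :=
  (Finset.univ.filter (fun i : Fin n => i < σ i)).card

def fixF {n : ℕ} (σ : Equiv.Perm (Fin n)) : ℕ :=
  (Finset.univ.filter (fun i : Fin n => σ i = i)).card

lemma exc_eq_excF {n : ℕ} (σ : Equiv.Perm (Fin n)) : exc σ = excF σ := by
  unfold exc excF
  refine Finset.card_bij'
    (fun a ha => (⟨a - 1, by simp [Finset.mem_filter, Finset.mem_Icc] at ha; omega⟩ : Fin n))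
    (fun b _ => (b : ℕ) + 1) ?hi ?hj ?left ?right
  case hi =>
    intro a ha
    simp only [Finset.mem_filter, Finset.mem_Icc] at ha ⊢
    obtain ⟨⟨h1, h2⟩, hlt⟩ := ha
    rw [pv, dif_pos ⟨h1, h2⟩] at hlt
    exact ⟨Finset.mem_univ _, by rw [Fin.lt_def]; simp only; omega⟩
  case hj =>
    intro b hb
    simp only [Finset.mem_filter, Finset.mem_Icc] at hb ⊢
    refine ⟨⟨by omega, by omega⟩, ?_⟩
    have h : 1 ≤ (b : ℕ) + 1 ∧ (b : ℕ) + 1 ≤ n := ⟨by omega, by omega⟩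
    rw [pv, dif_pos h]
    have h2 : (⟨(b : ℕ) + 1 - 1, by omega⟩ : Fin n) = b := by apply Fin.ext; simp
    rw [h2]
    rw [Fin.lt_def] at hb
    omega
  case left =>
    intro a ha
    simp only [Finset.mem_filter, Finset.mem_Icc] at ha
    simp only
    omega
  case right =>
    intro b _; apply Fin.ext; simp

lemma fixpt_eq_fixF {n : ℕ} (σ : Equiv.Perm (Fin n)) : fixpt σ = fixF σ := by
  unfold fixpt fixF
  refine Finset.card_bij'
    (fun a ha => (⟨a - 1, by simp [Finset.mem_filter, Finset.mem_Icc] at ha; omega⟩ : Fin n))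
    (fun b _ => (b : ℕ) + 1) ?hi ?hj ?left ?right
  case hi =>
    intro a ha
    simp only [Finset.mem_filter, Finset.mem_Icc] at ha ⊢
    obtain ⟨⟨h1, h2⟩, heq⟩ := ha
    rw [pv, dif_pos ⟨h1, h2⟩] at heq
    exact ⟨Finset.mem_univ _, by apply Fin.ext; simp only; omega⟩
  case hj =>
    intro b hb
    simp only [Finset.mem_filter, Finset.mem_Icc] at hb ⊢
    refine ⟨⟨by omega, by omega⟩, ?_⟩
    have h : 1 ≤ (b : ℕ) + 1 ∧ (b : ℕ) + 1 ≤ n := ⟨by omega, by omega⟩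
    rw [pv, dif_pos h]
    have h2 : (⟨(b : ℕ) + 1 - 1, by omega⟩ : Fin n) = b := by apply Fin.ext; simp
    rw [h2, hb.2]
  case left =>
    intro a ha
    simp only [Finset.mem_filter, Finset.mem_Icc] at ha
    simp only
    omega
  case right =>
    intro b _; apply Fin.ext; simp

def Fgen {R : Type*} [CommRing R] (x v : R) (m : ℕ) : R :=
  ∑ σ : Equiv.Perm (Fin m), x ^ excF σ * v ^ fixF σ

section key
variable {R : Type*} [CommRing R] {n : ℕ}

lemma key_sum (x v : R) (t : Finset (Fin n)) :
    ∑ σ ∈ univ.filter (fun σ : Equiv.Perm (Fin n) => ∀ i ∈ t, σ i = i),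
      x ^ excF σ * v ^ (fixF σ - t.card) = Fgen x v (n - t.card) := by
  classical
  have hs : (tᶜ).card = n - t.card := by simp [Finset.card_compl]
  set m := n - t.card with hm
  set e := (tᶜ).orderIsoOfFin hs with he
  set Φ : Equiv.Perm (Fin m) → Equiv.Perm (Fin n) :=
    fun τ => τ.extendDomain e.toEquiv with hΦdef
  have hΦfix : ∀ τ (i : Fin n), i ∈ t → Φ τ i = i := by
    intro τ i hi
    exact Equiv.Perm.extendDomain_apply_not_subtype τ e.toEquiv (by simp [hi])
  have hΦe : ∀ τ (j : Fin m), Φ τ ↑(e j) = ↑(e (τ j)) := by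
    intro τ j
    simpa using Equiv.Perm.extendDomain_apply_image τ e.toEquiv j
  have hΦnot : ∀ τ (i : Fin n), i ∉ tᶜ → Φ τ i = i := by
    intro τ i hi
    exact Equiv.Perm.extendDomain_apply_not_subtype τ e.toEquiv hi
  have hΦsub : ∀ τ (i : Fin n) (h : i ∈ tᶜ),
      Φ τ i = ↑(e (τ (e.symm ⟨i, h⟩))) := by
    intro τ i h
    exact Equiv.Perm.extendDomain_apply_subtype τ e.toEquiv h
  -- excedance preservation
  have hexc : ∀ τ, excF (Φ τ) = excF τ := by
    intro τ
    unfold excF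
    have hin : ∀ i ∈ univ.filter (fun i : Fin n => i < Φ τ i), i ∈ tᶜ := by
      intro i hi
      simp only [Finset.mem_filter] at hi
      by_contra hc
      rw [hΦnot τ i hc] at hi
      exact lt_irrefl _ hi.2
    refine (Finset.card_bij' (fun j _ => (↑(e j) : Fin n))
      (fun i hi => e.symm ⟨i, hin i hi⟩) ?hi ?hj ?left ?right).symm
    case hi =>
      intro j hj
      simp only [Finset.mem_filter, Finset.mem_univ, true_and] at hj ⊢
      rw [hΦe τ j]
      exact Subtype.coe_lt_coe.mpr (e.lt_iff_lt.mpr hj)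
    case hj =>
      intro i hi
      have hc := hin i hi
      simp only [Finset.mem_filter, Finset.mem_univ, true_and] at hi ⊢
      rw [hΦsub τ i hc] at hi
      have h2 : (⟨i, hc⟩ : {x // x ∈ tᶜ}) < e (τ (e.symm ⟨i, hc⟩)) :=
        Subtype.coe_lt_coe.mp hi
      have h3 := e.symm.lt_iff_lt.mpr h2
      simpa using h3
    case left =>
      intro j _
      simp
    case right =>
      intro i hi
      simp
  -- fixed point count
  have hfix : ∀ τ, fixF (Φ τ) = t.card + fixF τ := by
    intro τ
    unfold fixF
    have huniv : (univ : Finset (Fin n)) = t ∪ tᶜ := (Finset.union_compl t).symm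
    rw [huniv, Finset.filter_union,
      Finset.card_union_of_disjoint
        (Finset.disjoint_filter_filter disjoint_compl_right)]
    congr 1
    · rw [Finset.filter_true_of_mem]
      intro i hi
      exact hΦfix τ i hi
    · refine (Finset.card_bij' (fun j _ => (↑(e j) : Fin n))
        (fun i hi => e.symm ⟨i, (Finset.mem_filter.mp hi).1⟩) ?hi ?hj ?left ?right).symm
      case hi =>
        intro j hj
        simp only [Finset.mem_filter, Finset.mem_univ, true_and] at hj
        simp only [Finset.mem_filter]
        refine ⟨(e j).2, ?_⟩
        rw [hΦe τ j, hj]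
      case hj =>
        intro i hi
        obtain ⟨hc, hfixi⟩ := Finset.mem_filter.mp hi
        simp only [Finset.mem_filter, Finset.mem_univ, true_and]
        rw [hΦsub τ i hc] at hfixi
        have : e (τ (e.symm ⟨i, hc⟩)) = ⟨i, hc⟩ := Subtype.ext hfixi
        have h2 := congrArg e.symm this
        simpa using h2
      case left =>
        intro j _
        simp
      case right =>
        intro i hi
        simp
  -- the sum bijection
  rw [Fgen]
  refine (Finset.sum_bij' (fun (τ : Equiv.Perm (Fin m)) _ => Φ τ)
    (fun σ hσ => (e.toEquiv.permCongr).symm (σ.subtypePerm (by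
      have hσ' : ∀ i ∈ t, σ i = i := by
        simpa using (Finset.mem_filter.mp hσ).2
      have hkey : ∀ i, i ∈ t ↔ σ i ∈ t := by
        intro i
        constructor
        · intro hi; rw [hσ' i hi]; exact hi
        · intro hi
          have h3 : σ i = i := σ.injective (hσ' _ hi)
          rwa [← h3]
      intro i
      simp only [Finset.mem_compl]
      exact not_congr (hkey i).symm))) ?hj ?hi ?left ?right ?hcongr).symm
  case hj =>
    intro τ _
    simp only [Finset.mem_filter, Finset.mem_univ, true_and]
    intro i hi
    exact hΦfix τ i hi
  case hi =>
    intro σ hσ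
    exact Finset.mem_univ _
  case left =>
    intro τ _
    apply Equiv.ext
    intro j
    simp only [Equiv.permCongr_symm_apply]
    rw [← Equiv.symm_apply_apply e.toEquiv (τ j)]
    congr 1
    apply Subtype.ext
    simpa [Equiv.Perm.subtypePerm_apply] using hΦe τ j
  case right =>
    intro σ hσ
    apply Equiv.ext
    intro i
    by_cases hc : i ∈ tᶜ
    · rw [hΦsub _ i hc]
      simp [Equiv.permCongr_symm_apply, Equiv.Perm.subtypePerm_apply,
        OrderIso.apply_symm_apply]
    · rw [hΦnot _ i hc]
      have hit : i ∈ t := by simpa using hc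
      exact ((Finset.mem_filter.mp hσ).2 i hit).symm
  case hcongr =>
    intro τ _
    rw [hexc τ, hfix τ]
    simp
end key


lemma Fgen_zero {R : Type*} [CommRing R] (x v : R) : Fgen x v 0 = 1 := by
  rw [Fgen, Finset.sum_eq_single (1 : Equiv.Perm (Fin 0))]
  · simp [excF, fixF]
  · intro b _ hb; exact absurd (Subsingleton.elim b 1) hb
  · simp

lemma convo {R : Type*} [CommRing R] (x u v : R) (n : ℕ) :
    ∑ k ∈ range (n+1), (n.choose k : R) * u ^ k * Fgen x v (n - k)
      = ∑ σ : Equiv.Perm (Fin n), x ^ excF σ * (u + v) ^ fixF σ := by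
  classical
  have hpow : ∀ σ : Equiv.Perm (Fin n),
      (u + v) ^ fixF σ =
        ∑ s ∈ (univ.filter (fun i => σ i = i)).powerset,
          u ^ s.card * v ^ (fixF σ - s.card) := by
    intro σ
    have h1 : (u + v) ^ fixF σ = ∏ _i ∈ univ.filter (fun i : Fin n => σ i = i), (u + v) := by
      rw [Finset.prod_const]; rfl
    rw [h1, Finset.prod_add]
    apply Finset.sum_congr rfl
    intro s hs
    rw [Finset.mem_powerset] at hs
    rw [Finset.prod_const, Finset.prod_const, Finset.card_sdiff_of_subset hs]
    rfl
  symm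
  calc ∑ σ : Equiv.Perm (Fin n), x ^ excF σ * (u + v) ^ fixF σ
      = ∑ σ : Equiv.Perm (Fin n), ∑ s ∈ (univ : Finset (Fin n)).powerset,
          ite (s ⊆ univ.filter (fun i => σ i = i))
            (x ^ excF σ * (u ^ s.card * v ^ (fixF σ - s.card))) 0 := by
        apply Finset.sum_congr rfl
        intro σ _
        rw [hpow σ, Finset.mul_sum, ← Finset.sum_filter]
        apply Finset.sum_congr
        · ext a
          simp [Finset.mem_powerset]
        · intro s _; rfl
    _ = ∑ s ∈ (univ : Finset (Fin n)).powerset, ∑ σ : Equiv.Perm (Fin n),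
          ite (s ⊆ univ.filter (fun i => σ i = i))
            (x ^ excF σ * (u ^ s.card * v ^ (fixF σ - s.card))) 0 := Finset.sum_comm
    _ = ∑ s ∈ (univ : Finset (Fin n)).powerset, u ^ s.card * Fgen x v (n - s.card) := by
        apply Finset.sum_congr rfl
        intro s _
        rw [← Finset.sum_filter]
        have hset : (univ.filter (fun σ : Equiv.Perm (Fin n) =>
            s ⊆ univ.filter (fun i => σ i = i)))
            = univ.filter (fun σ : Equiv.Perm (Fin n) => ∀ i ∈ s, σ i = i) := by
          apply Finset.filter_congr
          intro σ _
          simp [Finset.subset_iff]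
        rw [hset, ← key_sum x v s, Finset.mul_sum]
        apply Finset.sum_congr rfl
        intro σ _
        ring
    _ = ∑ k ∈ range (n+1), (n.choose k : R) * u ^ k * Fgen x v (n - k) := by
        rw [Finset.sum_powerset]
        have hcard : (univ : Finset (Fin n)).card = n := by simp
        rw [hcard]
        apply Finset.sum_congr rfl
        intro k hk
        rw [Finset.sum_congr rfl (fun s hs => by
          rw [(Finset.mem_powersetCard.mp hs).2])]
        rw [Finset.sum_const, Finset.card_powersetCard, hcard, nsmul_eq_mul, mul_assoc]

lemma wexc_eq {m : ℕ} (σ : Equiv.Perm (Fin m)) :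
    excF σ + fixF σ = (univ.filter (fun i : Fin m => i ≤ σ i)).card := by
  unfold excF fixF
  rw [← Finset.card_union_of_disjoint, ← Finset.filter_or]
  · apply congrArg
    apply Finset.filter_congr
    intro i _
    constructor
    · rintro (h | h)
      · exact le_of_lt h
      · exact le_of_eq h.symm
    · intro h
      rcases lt_or_eq_of_le h with h' | h'
      · exact Or.inl h'
      · exact Or.inr h'.symm
  · rw [Finset.disjoint_left]
    intro i hi hi'
    simp only [Finset.mem_filter] at hi hi'
    exact absurd hi'.2 (ne_of_gt hi.2)

lemma rot_wexc {n : ℕ} (σ : Equiv.Perm (Fin (n+1))) :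
    (univ.filter (fun i : Fin (n+1) => i ≤ ((finRotate (n+1))⁻¹ * σ) i)).card
      = excF σ + 1 := by
  classical
  have hpt : ∀ i : Fin (n+1),
      (i ≤ (finRotate (n+1))⁻¹ (σ i)) ↔ (σ i = 0 ∨ i < σ i) := by
    intro i
    set a := σ i with ha
    set c := (finRotate (n+1))⁻¹ a with hc
    have hca : c + 1 = a := by
      rw [hc, ← finRotate_succ_apply]
      exact Equiv.apply_symm_apply _ _
    by_cases hcl : (c : ℕ) = n
    · have hcl' : c = Fin.last n := Fin.ext hcl
      have ha0 : a = 0 := by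
        rw [← hca, hcl', Fin.last_add_one]
      constructor
      · intro _; exact Or.inl ha0
      · intro _; rw [hcl']; exact Fin.le_last i
    · have hlt : (c : ℕ) < n := lt_of_le_of_ne (Nat.lt_succ_iff.mp c.isLt) hcl
      have hval : (a : ℕ) = (c : ℕ) + 1 := by
        rw [← hca]
        exact Fin.val_add_one_of_lt (by rw [Fin.lt_def]; simpa using hlt)
      constructor
      · intro h
        right
        rw [Fin.lt_def, hval]
        rw [Fin.le_def] at h
        omega
      · intro h
        rcases h with h0 | h
        · exfalso
          rw [h0] at hval
          simp at hval
        · rw [Fin.le_def]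
          rw [Fin.lt_def] at h
          omega
  have hfe : (univ.filter (fun i : Fin (n+1) => i ≤ ((finRotate (n+1))⁻¹ * σ) i))
      = univ.filter (fun i : Fin (n+1) => σ i = 0 ∨ i < σ i) := by
    apply Finset.filter_congr
    intro i _
    rw [Equiv.Perm.mul_apply]
    exact hpt i
  rw [hfe, Finset.filter_or, Finset.card_union_of_disjoint]
  · have h1 : univ.filter (fun i : Fin (n+1) => σ i = 0) = {σ⁻¹ 0} := by
      ext i
      simp only [Finset.mem_filter, Finset.mem_univ, true_and, Finset.mem_singleton]
      constructor
      · intro h; rw [← h]; simp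
      · intro h; rw [h]; simp
    rw [h1, Finset.card_singleton]
    rw [add_comm]
    rfl
  · rw [Finset.disjoint_left]
    intro i hi hi'
    simp only [Finset.mem_filter] at hi hi'
    rw [hi.2] at hi'
    exact Fin.not_lt_zero i hi'.2

lemma WA {R : Type*} [CommRing R] (x : R) {m : ℕ} (hm : 1 ≤ m) :
    Fgen x x m = x * Fgen x 1 m := by
  obtain ⟨n, rfl⟩ : ∃ n, m = n + 1 := ⟨m - 1, by omega⟩
  have h1 : Fgen x x (n+1) = ∑ σ : Equiv.Perm (Fin (n+1)),
      x ^ ((univ.filter (fun i : Fin (n+1) => i ≤ σ i)).card) := by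
    rw [Fgen]
    apply Finset.sum_congr rfl
    intro σ _
    rw [← pow_add, wexc_eq]
  have h2 : x * Fgen x 1 (n+1) = ∑ σ : Equiv.Perm (Fin (n+1)), x ^ (excF σ + 1) := by
    rw [Fgen, Finset.mul_sum]
    apply Finset.sum_congr rfl
    intro σ _
    rw [one_pow, mul_one, pow_succ, mul_comm]
  rw [h1, h2]
  refine (Fintype.sum_equiv (Equiv.mulLeft ((finRotate (n+1))⁻¹)) _ _ ?_).symm
  intro σ
  rw [Equiv.coe_mulLeft]
  rw [rot_wexc σ]



lemma main_id {R : Type*} [CommRing R] (x z : R) (n : ℕ) :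
    ∑ k ∈ range (n+1), (n.choose k : R) * (x ^ k - x) * Fgen x z (n - k)
      = (1 - x) * z ^ n := by
  have expand : ∀ k, (n.choose k : R) * (x ^ k - x) * Fgen x z (n - k)
      = (n.choose k : R) * x ^ k * Fgen x z (n - k)
        - x * ((n.choose k : R) * 1 ^ k * Fgen x z (n - k)) := by
    intro k; ring
  rw [Finset.sum_congr rfl (fun k _ => expand k), Finset.sum_sub_distrib, ← Finset.mul_sum]
  rw [convo x x z n, convo x 1 z n]
  have hA : ∑ σ : Equiv.Perm (Fin n), x ^ excF σ * (x + z) ^ fixF σ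
      = ∑ k ∈ range (n+1), (n.choose k : R) * z ^ k * Fgen x x (n - k) := by
    have h := (convo x z x n).symm
    simp only [add_comm z x] at h
    exact h
  have hB : ∑ σ : Equiv.Perm (Fin n), x ^ excF σ * (1 + z) ^ fixF σ
      = ∑ k ∈ range (n+1), (n.choose k : R) * z ^ k * Fgen x 1 (n - k) := by
    have h := (convo x z 1 n).symm
    simp only [add_comm z (1 : R)] at h
    exact h
  rw [hA, hB, Finset.mul_sum, ← Finset.sum_sub_distrib]
  rw [Finset.sum_eq_single n]
  · rw [Nat.choose_self, Nat.sub_self, Fgen_zero, Fgen_zero]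
    push_cast
    ring
  · intro k hk hkn
    have hk' : k < n := by
      rw [Finset.mem_range] at hk
      omega
    have h1 : 1 ≤ n - k := by omega
    rw [WA x h1]
    ring
  · intro h
    exfalso
    exact h (Finset.mem_range.mpr (by omega))


open MvPolynomial PowerSeries

/-- `F_n(x,z) = Σ_{σ ∈ S_n} x^{exc σ} z^{fix σ}` with `x = MvPolynomial.X 0`, `z = MvPolynomial.X 1`, over `ℚ`. -/
noncomputable def Fxz (n : ℕ) : MvPolynomial (Fin 2) ℚ :=
  ∑ σ : Equiv.Perm (Fin n), MvPolynomial.X 0 ^ exc σ * MvPolynomial.X 1 ^ fixpt σ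

/-- The exponential series `e^{pt} = Σ_n pⁿ tⁿ/n!` as a formal power series in `t`. -/
noncomputable def expS (p : MvPolynomial (Fin 2) ℚ) :
    PowerSeries (MvPolynomial (Fin 2) ℚ) :=
  PowerSeries.mk fun n => (n.factorial : ℚ)⁻¹ • p ^ n

lemma Fxz_eq (n : ℕ) : Fxz n = Fgen (MvPolynomial.X 0) (MvPolynomial.X 1) n := by
  rw [Fxz, Fgen]
  apply Finset.sum_congr rfl
  intro σ _
  rw [exc_eq_excF, fixpt_eq_fixF]


/-- Foata–Schützenberger:
`(e^{xt} - x e^t) · Σ_n F_n(x,z) tⁿ/n! = (1-x) e^{zt}`. -/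
theorem foata_schutzenberger :
    (expS (MvPolynomial.X 0) - PowerSeries.C (MvPolynomial.X 0) * expS 1) *
        PowerSeries.mk (fun n => (n.factorial : ℚ)⁻¹ • Fxz n) =
      PowerSeries.C (1 - MvPolynomial.X 0) * expS (MvPolynomial.X 1) := by
  ext n
  rw [PowerSeries.coeff_mul]
  rw [Finset.Nat.sum_antidiagonal_eq_sum_range_succ_mk]
  have hterm : ∀ k ∈ range (n+1),
      (PowerSeries.coeff k)
          (expS (MvPolynomial.X 0)
            - PowerSeries.C (MvPolynomial.X 0) * expS 1)
        * (PowerSeries.coeff (n - k)) (PowerSeries.mk (fun m => (m.factorial : ℚ)⁻¹ • Fxz m))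
      = MvPolynomial.C ((n.factorial : ℚ)⁻¹)
          * ((n.choose k : MvPolynomial (Fin 2) ℚ)
            * (MvPolynomial.X 0 ^ k - MvPolynomial.X 0) * Fxz (n - k)) := by
    intro k hk
    have hkn : k ≤ n := by rw [Finset.mem_range] at hk; omega
    rw [map_sub, PowerSeries.coeff_C_mul, expS, expS, PowerSeries.coeff_mk,
      PowerSeries.coeff_mk, PowerSeries.coeff_mk, one_pow,
      MvPolynomial.smul_eq_C_mul, MvPolynomial.smul_eq_C_mul, MvPolynomial.smul_eq_C_mul]
    have hsc : ((k.factorial : ℚ)⁻¹ * ((n - k).factorial : ℚ)⁻¹)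
        = (n.factorial : ℚ)⁻¹ * (n.choose k : ℚ) := by
      rw [Nat.cast_choose ℚ hkn]
      have h1 : (k.factorial : ℚ) ≠ 0 := Nat.cast_ne_zero.mpr k.factorial_ne_zero
      have h2 : ((n - k).factorial : ℚ) ≠ 0 := Nat.cast_ne_zero.mpr (n - k).factorial_ne_zero
      have h3 : (n.factorial : ℚ) ≠ 0 := Nat.cast_ne_zero.mpr n.factorial_ne_zero
      field_simp
    calc (MvPolynomial.C ((k.factorial : ℚ)⁻¹) * MvPolynomial.X 0 ^ k
            - MvPolynomial.X 0 * (MvPolynomial.C ((k.factorial : ℚ)⁻¹) * 1))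
          * (MvPolynomial.C (((n - k).factorial : ℚ)⁻¹) * Fxz (n - k))
        = (MvPolynomial.C ((k.factorial : ℚ)⁻¹) * MvPolynomial.C (((n - k).factorial : ℚ)⁻¹))
            * ((MvPolynomial.X 0 ^ k - MvPolynomial.X 0) * Fxz (n - k)) := by ring
      _ = MvPolynomial.C ((k.factorial : ℚ)⁻¹ * ((n - k).factorial : ℚ)⁻¹)
            * ((MvPolynomial.X 0 ^ k - MvPolynomial.X 0) * Fxz (n - k)) := by rw [← map_mul]
      _ = MvPolynomial.C ((n.factorial : ℚ)⁻¹ * (n.choose k : ℚ))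
            * ((MvPolynomial.X 0 ^ k - MvPolynomial.X 0) * Fxz (n - k)) := by rw [hsc]
      _ = MvPolynomial.C ((n.factorial : ℚ)⁻¹)
            * ((n.choose k : MvPolynomial (Fin 2) ℚ)
              * (MvPolynomial.X 0 ^ k - MvPolynomial.X 0) * Fxz (n - k)) := by
          rw [map_mul]
          have hC : (MvPolynomial.C ((n.choose k : ℚ)) : MvPolynomial (Fin 2) ℚ)
              = (n.choose k : MvPolynomial (Fin 2) ℚ) := by
            simp
          rw [hC]
          ring
  rw [Finset.sum_congr rfl hterm, ← Finset.mul_sum]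
  have hmain := main_id (MvPolynomial.X 0 : MvPolynomial (Fin 2) ℚ) (MvPolynomial.X 1) n
  have hFx : ∀ k ∈ range (n+1),
      (n.choose k : MvPolynomial (Fin 2) ℚ)
          * (MvPolynomial.X 0 ^ k - MvPolynomial.X 0) * Fxz (n - k)
        = (n.choose k : MvPolynomial (Fin 2) ℚ)
          * (MvPolynomial.X 0 ^ k - MvPolynomial.X 0)
          * Fgen (MvPolynomial.X 0) (MvPolynomial.X 1) (n - k) := by
    intro k _
    rw [Fxz_eq]
  rw [Finset.sum_congr rfl hFx, hmain]
  rw [PowerSeries.coeff_C_mul, expS, PowerSeries.coeff_mk, MvPolynomial.smul_eq_C_mul]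
  ring
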